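/- Let F be a field, H a finite subset of F with |H| = h, k ≥ 1, d ≥ 1, l ≥ 1, m natural numbers with m + l·d ≥ k·(h − 1), and g : H^k → F a function. Then there exists a polynomial P ∈ F[x₁,…,x_k, y], not identically zero, whose (1,…,1,d)-weighted degree is at most m + l·d, such that P(a, g(a)) = 0 for every a ∈ H^k. -/

import Mathlib

open MvPolynomial

/-- **Proposition 4.** If `m + l·d ≥ k·(h−1)` (with `k, d, l ≥ 1` and `|H| = h`), then for
any `g : H^k → F` there is a nonzero polynomial `P ∈ F[x₁,…,x_k,y]` of
`(1,…,1,d)`-weighted degree at most `m + l·d` vanishing at `(a, g(a))` for all `a ∈ H^k`. -/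
theorem exists_nonzero_vanishing_multivariate_poly
    (F : Type*) [Field F] (H : Finset F) (h k d l m : ℕ)
    (hH : H.card = h) (hk : 1 ≤ k) (hd : 1 ≤ d) (hl : 1 ≤ l)
    (hdeg : m + l * d ≥ k * (h - 1))
    (g : (Fin k → F) → F) :
    ∃ P : MvPolynomial (Fin (k + 1)) F, P ≠ 0 ∧
      P.weightedTotalDegree (Fin.snoc (fun _ : Fin k => 1) d) ≤ m + l * d ∧
      ∀ a : Fin k → F, (∀ i, a i ∈ H) →
        MvPolynomial.eval (Fin.snoc a (g a)) P = 0 := by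
  classical
  set w : Fin (k + 1) → ℕ := Fin.snoc (fun _ : Fin k => 1) d with hw
  set T : Finset (Fin k → F) := Fintype.piFinset (fun _ : Fin k => H) with hT
  set D : (Fin k → F) → F := fun t => ∏ i, ∏ c ∈ H.erase (t i), (t i - c) with hD
  set N : (Fin k → F) → MvPolynomial (Fin k) F :=
    fun t => ∏ i, ∏ c ∈ H.erase (t i), (X i - C c) with hN
  set Q : MvPolynomial (Fin k) F := ∑ t ∈ T, C (g t / D t) * N t with hQ
  have hDne : ∀ t : Fin k → F, (∀ i, t i ∈ H) → D t ≠ 0 := by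
    intro t ht
    refine Finset.prod_ne_zero_iff.2 fun i _ => Finset.prod_ne_zero_iff.2 fun c hc => ?_
    exact sub_ne_zero.2 (Ne.symm (Finset.mem_erase.1 hc).1)
  have hevalN : ∀ a t : Fin k → F,
      eval a (N t) = ∏ i, ∏ c ∈ H.erase (t i), (a i - c) := by
    intro a t
    simp [hN]
  have hevalQ : ∀ a : Fin k → F, (∀ i, a i ∈ H) → eval a Q = g a := by
    intro a ha
    have haT : a ∈ T := by simpa [hT] using ha
    rw [hQ, map_sum, Finset.sum_eq_single a]
    · rw [map_mul, eval_C, hevalN]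
      exact div_mul_cancel₀ _ (hDne a ha)
    · intro t _ htne
      obtain ⟨i, hi⟩ : ∃ i, a i ≠ t i := by
        by_contra hcon
        push_neg at hcon
        exact htne (funext fun i => hcon i).symm
      rw [map_mul, hevalN]
      have : (∏ i, ∏ c ∈ H.erase (t i), (a i - c)) = 0 := by
        refine Finset.prod_eq_zero (Finset.mem_univ i) ?_
        refine Finset.prod_eq_zero (Finset.mem_erase.2 ⟨hi, ha i⟩) ?_
        simp
      rw [this, mul_zero]
    · intro hcon
      exact absurd haT hcon
  have hdegQ : Q.totalDegree ≤ k * (h - 1) := by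
    rw [hQ]
    refine (totalDegree_finset_sum _ _).trans (Finset.sup_le ?_)
    intro t ht
    refine (totalDegree_mul _ _).trans ?_
    rw [totalDegree_C, zero_add]
    refine (totalDegree_finset_prod _ _).trans ?_
    have hbound : ∀ i : Fin k,
        (∏ c ∈ H.erase (t i), (X i - C c) : MvPolynomial (Fin k) F).totalDegree ≤ h - 1 := by
      intro i
      have hti : t i ∈ H := by
        have := Fintype.mem_piFinset.1 (by simpa [hT] using ht)
        exact this i
      refine (totalDegree_finset_prod _ _).trans ?_
      have : ∀ c ∈ H.erase (t i),
          (X i - C c : MvPolynomial (Fin k) F).totalDegree ≤ 1 := by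
        intro c _
        exact (totalDegree_sub_C_le _ _).trans (le_of_eq (totalDegree_X i))
      calc ∑ c ∈ H.erase (t i), (X i - C c : MvPolynomial (Fin k) F).totalDegree
          ≤ ∑ _c ∈ H.erase (t i), 1 := Finset.sum_le_sum this
        _ = (H.erase (t i)).card := by simp
        _ = h - 1 := by rw [Finset.card_erase_of_mem hti, hH]
    calc ∑ i, (∏ c ∈ H.erase (t i), (X i - C c) : MvPolynomial (Fin k) F).totalDegree
        ≤ ∑ _i : Fin k, (h - 1) := Finset.sum_le_sum fun i _ => hbound i
      _ = k * (h - 1) := by simp [mul_comm]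
  refine ⟨X (Fin.last k) - rename Fin.castSucc Q, ?_, ?_, ?_⟩
  · -- nonzero: the coefficient of the monomial y is 1
    intro hP
    have hc : coeff (Finsupp.single (Fin.last k) 1) (X (Fin.last k) -
        rename Fin.castSucc Q : MvPolynomial (Fin (k + 1)) F) = 1 := by
      rw [coeff_sub, coeff_X]
      have : coeff (Finsupp.single (Fin.last k) 1) (rename Fin.castSucc Q) = 0 := by
        by_contra hne
        obtain ⟨u, hu, -⟩ := coeff_rename_ne_zero _ _ _ hne
        have h0 : (Finsupp.mapDomain Fin.castSucc u) (Fin.last k) = 0 := by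
          refine Finsupp.mapDomain_notin_range _ _ ?_
          rintro ⟨i, hi⟩
          exact absurd hi (ne_of_lt (Fin.castSucc_lt_last i))
        rw [hu] at h0
        simp at h0
      rw [this, sub_zero, if_pos rfl]
    rw [hP] at hc
    simp at hc
  · -- weighted degree bound
    have hsup : ∀ s ∈ (X (Fin.last k) - rename Fin.castSucc Q :
        MvPolynomial (Fin (k + 1)) F).support, Finsupp.weight w s ≤ m + l * d := by
      intro s hs
      have hsub := MvPolynomial.support_sub _ _ _ hs
      rcases Finset.mem_union.1 hsub with hs1 | hs2
      · -- s = single (last k) 1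
        rw [support_X] at hs1
        have : s = Finsupp.single (Fin.last k) 1 := Finset.mem_singleton.1 hs1
        subst this
        have : Finsupp.weight w (Finsupp.single (Fin.last k) 1) = d := by
          rw [Finsupp.weight_apply, Finsupp.sum_single_index]
          · simp [hw]
          · simp
        rw [this]
        calc d ≤ l * d := Nat.le_mul_of_pos_left d hl
          _ ≤ m + l * d := Nat.le_add_left _ _
      · -- s comes from Q
        have hne : coeff s (rename Fin.castSucc Q) ≠ 0 := mem_support_iff.1 hs2
        obtain ⟨u, hu, hcu⟩ := coeff_rename_ne_zero _ _ _ hne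
        have huQ : u ∈ Q.support := mem_support_iff.2 hcu
        have h1 : Finsupp.weight w s = u.sum fun _ n => n := by
          rw [← hu, Finsupp.weight_apply,
            Finsupp.sum_mapDomain_index (h := fun i c => c • w i)
              (fun _ => zero_smul _ _) (fun b n₁ n₂ => add_smul _ _ _)]
          refine Finset.sum_congr rfl fun i _ => ?_
          simp [hw, Fin.snoc_castSucc]
        rw [h1]
        calc u.sum (fun _ n => n) ≤ Q.totalDegree := le_totalDegree huQ
          _ ≤ k * (h - 1) := hdegQ
          _ ≤ m + l * d := hdeg
    exact Finset.sup_le hsup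
  · intro a ha
    rw [map_sub, eval_X, eval_rename]
    have hcomp : (Fin.snoc a (g a) : Fin (k + 1) → F) ∘ Fin.castSucc = a := by
      funext i
      simp [Fin.snoc_castSucc]
    rw [hcomp, hevalQ a ha]
    simp
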